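/- For integers ℓ, m ≥ 1, the index-reduction operators S_ℓ and S_m commute: S_ℓ S_m = S_m S_ℓ as operators on L²(0,1). -/

import Mathlib

open MeasureTheory Set intervalIntegral


lemma pow_inv_eq_zpow {t : ℝ} (ht : 0 < t) (ℓ m : ℕ) (hm : 1 ≤ m) :
    t ^ (2*m-1) * (t ^ (2*ℓ))⁻¹ = t ^ ((2*m : ℤ) - 2*ℓ - 1) := by
  have ht' : t ≠ 0 := ht.ne'
  rw [← zpow_natCast t (2*m-1), ← zpow_natCast t (2*ℓ), ← zpow_neg,
    ← zpow_add₀ ht']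
  congr 1
  have : ((2*m-1 : ℕ) : ℤ) = 2*(m:ℤ) - 1 := by
    push_cast [Nat.cast_sub (by omega : 1 ≤ 2*m)]; ring
  rw [this]; push_cast; ring

lemma inner_ftc (ℓ m : ℕ) (hm : 1 ≤ m) (hne : ℓ ≠ m) {x s : ℝ}
    (hx : 0 < x) (hxs : x ≤ s) :
    ∫ t in Ioc x s, t ^ (2*m-1) * (t ^ (2*ℓ))⁻¹
      = (s^(2*m) * (s^(2*ℓ))⁻¹ - x^(2*m) * (x^(2*ℓ))⁻¹) / (2*(m:ℝ) - 2*ℓ) := by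
  have hs : 0 < s := hx.trans_le hxs
  rw [← intervalIntegral.integral_of_le hxs]
  have hcongr : ∀ t ∈ uIcc x s, t ^ (2*m-1) * (t ^ (2*ℓ))⁻¹
      = t ^ ((2*m : ℤ) - 2*ℓ - 1) := by
    intro t ht
    rw [uIcc_of_le hxs] at ht
    exact pow_inv_eq_zpow (hx.trans_le ht.1) ℓ m hm
  rw [intervalIntegral.integral_congr hcongr]
  rw [integral_zpow (Or.inr ⟨by omega, by
    rw [uIcc_of_le hxs]; intro h; exact absurd h.1 (not_le.mpr hx)⟩)]
  have h1 : (2*m : ℤ) - 2*ℓ - 1 + 1 = 2*m - 2*ℓ := by ring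
  rw [h1]
  have hz : ∀ u : ℝ, 0 < u → u ^ ((2*m:ℤ) - 2*ℓ) = u^(2*m) * (u^(2*ℓ))⁻¹ := by
    intro u hu
    rw [zpow_sub₀ hu.ne', div_eq_mul_inv]
    norm_cast
  rw [hz s hs, hz x hx]
  push_cast
  ring_nf


lemma fubini_triangle {x : ℝ}
    {w h : ℝ → ℝ} (hwi : IntegrableOn w (Ioc x 1))
    (hh : IntegrableOn h (Ioc x 1)) :
    ∫ t in Ioc x 1, w t * ∫ s in Ioc t 1, h s
      = ∫ s in Ioc x 1, (∫ t in Ioc x s, w t) * h s := by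
  set μ := volume.restrict (Ioc x 1) with hμ
  have hset : MeasurableSet {p : ℝ × ℝ | p.1 < p.2} :=
    measurableSet_lt measurable_fst measurable_snd
  have hFint : Integrable ({p : ℝ × ℝ | p.1 < p.2}.indicator
      (fun p => w p.1 * h p.2)) (μ.prod μ) :=
    (hwi.mul_prod hh).indicator hset
  have key := integral_integral_swap (f := fun t s =>
      ({p : ℝ × ℝ | p.1 < p.2}.indicator (fun p => w p.1 * h p.2)) (t, s))
      (μ := μ) (ν := μ) hFint
  calc ∫ t in Ioc x 1, w t * ∫ s in Ioc t 1, h s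
      = ∫ t, (∫ s, ({p : ℝ × ℝ | p.1 < p.2}.indicator
          (fun p => w p.1 * h p.2)) (t, s) ∂μ) ∂μ := by
        refine setIntegral_congr_fun measurableSet_Ioc (fun t ht => ?_)
        have : ∀ s, ({p : ℝ × ℝ | p.1 < p.2}.indicator
            (fun p => w p.1 * h p.2)) (t, s)
            = (Ioi t).indicator (fun s => w t * h s) s := by
          intro s; by_cases hs : t < s <;> simp [indicator, hs, Set.mem_Ioi]
        simp_rw [this]
        rw [MeasureTheory.integral_indicator measurableSet_Ioi, hμ,
          Measure.restrict_restrict measurableSet_Ioi]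
        have : Ioi t ∩ Ioc x 1 = Ioc t 1 := by
          ext u; simp only [mem_inter_iff, mem_Ioi, mem_Ioc]
          constructor
          · rintro ⟨h1, _, h3⟩; exact ⟨h1, h3⟩
          · rintro ⟨h1, h2⟩; exact ⟨h1, ht.1.trans h1, h2⟩
        rw [this, MeasureTheory.integral_const_mul]
      _ = ∫ s, (∫ t, ({p : ℝ × ℝ | p.1 < p.2}.indicator
          (fun p => w p.1 * h p.2)) (t, s) ∂μ) ∂μ := key
      _ = ∫ s in Ioc x 1, (∫ t in Ioc x s, w t) * h s := by
        refine setIntegral_congr_fun measurableSet_Ioc (fun s hs => ?_)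
        have : ∀ t, ({p : ℝ × ℝ | p.1 < p.2}.indicator
            (fun p => w p.1 * h p.2)) (t, s)
            = (Iio s).indicator (fun t => w t * h s) t := by
          intro t; by_cases ht : t < s <;> simp [indicator, ht, Set.mem_Iio]
        simp_rw [this]
        rw [MeasureTheory.integral_indicator measurableSet_Iio, hμ,
          Measure.restrict_restrict measurableSet_Iio]
        have h1 : Iio s ∩ Ioc x 1 = Ioo x s := by
          ext u; simp only [mem_inter_iff, mem_Iio, mem_Ioc, mem_Ioo]
          constructor
          · rintro ⟨h1, h2, h3⟩; exact ⟨h2, h1⟩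
          · rintro ⟨h1, h2⟩; exact ⟨h2, h1, h2.le.trans hs.2⟩
        rw [h1, MeasureTheory.integral_mul_const, ← integral_Ioc_eq_integral_Ioo]

section helpers
variable {f : ℝ → ℝ}

lemma int_aux (k : ℕ) {x : ℝ} (hx : 0 < x) (hfi : IntegrableOn f (Ioc x 1)) :
    IntegrableOn (fun t => (t ^ (2*k))⁻¹ * f t) (Ioc x 1) := by
  apply hfi.bdd_mul (c := (x ^ (2*k))⁻¹)
  · exact ((measurable_id.pow_const _).inv).aestronglyMeasurable
  · filter_upwards [ae_restrict_mem measurableSet_Ioc] with t ht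
    have h1 : (0:ℝ) < x ^ (2*k) := pow_pos hx _
    have h2 : x ^ (2*k) ≤ t ^ (2*k) := pow_le_pow_left₀ hx.le ht.1.le _
    rw [Real.norm_eq_abs, abs_inv, abs_of_nonneg (le_trans h1.le h2)]
    exact inv_anti₀ h1 h2

lemma int_aux' (k : ℕ) {x : ℝ} (hx : 0 < x) (hfi : IntegrableOn f (Ioc x 1)) :
    IntegrableOn (fun t => (t ^ (2*k))⁻¹ * f t) (Icc x 1) :=
  (int_aux k hx hfi).congr_set_ae Ioc_ae_eq_Icc.symm

lemma cont_E (k : ℕ) {x : ℝ} (hx : 0 < x) (hx1 : x ≤ 1)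
    (hfi : IntegrableOn f (Ioc x 1)) :
    ContinuousOn (fun t => ∫ s in t..1, (s ^ (2*k))⁻¹ * f s) (Icc x 1) := by
  have h := intervalIntegral.continuousOn_primitive_interval_left
    (f := fun s => (s ^ (2*k))⁻¹ * f s) (a := x) (b := 1) (μ := volume)
    (by rw [uIcc_of_le hx1]; exact int_aux' k hx hfi)
  rwa [uIcc_of_le hx1] at h

end helpers


lemma key (ℓ m : ℕ) (hℓ : 1 ≤ ℓ) (hm : 1 ≤ m) (hne : ℓ ≠ m)
    (f : ℝ → ℝ) {x : ℝ} (hx0 : 0 < x) (hx1 : x < 1)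
    (hfi : ∀ y : ℝ, 0 < y → IntegrableOn f (Ioc y 1)) :
    (f x - 4*(m:ℝ)*x^(2*m-1) * ∫ t in x..1, (t ^ (2*m))⁻¹ * f t)
      - 4*(ℓ:ℝ)*x^(2*ℓ-1) * (∫ t in x..1, (t ^ (2*ℓ))⁻¹ *
          (f t - 4*(m:ℝ)*t^(2*m-1) * ∫ s in t..1, (s ^ (2*m))⁻¹ * f s))
    = f x - 4*(m:ℝ)*x^(2*m-1) * (∫ t in x..1, (t ^ (2*m))⁻¹ * f t)
        - 4*(ℓ:ℝ)*x^(2*ℓ-1) * (∫ t in x..1, (t ^ (2*ℓ))⁻¹ * f t)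
        + (16*(ℓ:ℝ)*m/(2*(m:ℝ) - 2*ℓ)) *
          (x^(2*ℓ-1) * (∫ t in x..1, (t ^ (2*ℓ))⁻¹ * f t)
            - x^(2*m-1) * (∫ t in x..1, (t ^ (2*m))⁻¹ * f t)) := by
  have hfx := hfi x hx0
  set Em : ℝ → ℝ := fun t => ∫ s in t..1, (s ^ (2*m))⁻¹ * f s with hEm
  set Aℓ : ℝ := ∫ t in x..1, (t ^ (2*ℓ))⁻¹ * f t with hAℓ
  set Am : ℝ := ∫ t in x..1, (t ^ (2*m))⁻¹ * f t with hAm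
  set d : ℝ := 2*(m:ℝ) - 2*ℓ with hd
  set c : ℝ := x^(2*m) * (x^(2*ℓ))⁻¹ with hc
  have hd0 : d ≠ 0 := by
    rw [hd]; intro h
    apply hne
    have : (m:ℝ) = ℓ := by linarith
    exact_mod_cast this.symm
  have hwcont : ContinuousOn (fun t : ℝ => t^(2*m-1) * (t^(2*ℓ))⁻¹) (Icc x 1) := by
    refine ContinuousOn.mul (continuousOn_pow _)
      (ContinuousOn.inv₀ (continuousOn_pow _) ?_)
    intro t ht; exact pow_ne_zero _ (ne_of_gt (lt_of_lt_of_le hx0 ht.1))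
  have hwint : IntegrableOn (fun t : ℝ => t^(2*m-1) * (t^(2*ℓ))⁻¹) (Ioc x 1) :=
    (hwcont.integrableOn_Icc).mono_set Ioc_subset_Icc_self
  -- Step 1: split the inner integral
  have h1 : IntervalIntegrable (fun t => (t^(2*ℓ))⁻¹ * f t) volume x 1 :=
    (intervalIntegrable_iff_integrableOn_Ioc_of_le hx1.le).mpr (int_aux ℓ hx0 hfx)
  have h2 : IntervalIntegrable (fun t => (t^(2*m-1)*(t^(2*ℓ))⁻¹) * Em t) volume x 1 := by
    apply ContinuousOn.intervalIntegrable
    rw [uIcc_of_le hx1.le]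
    exact hwcont.mul (cont_E m hx0 hx1.le hfx)
  have hsplit : (∫ t in x..1, (t ^ (2*ℓ))⁻¹ * (f t - 4*(m:ℝ)*t^(2*m-1) * Em t))
      = Aℓ - 4*(m:ℝ) * ∫ t in x..1, (t^(2*m-1)*(t^(2*ℓ))⁻¹) * Em t := by
    have : (∫ t in x..1, (t ^ (2*ℓ))⁻¹ * (f t - 4*(m:ℝ)*t^(2*m-1) * Em t))
        = ∫ t in x..1, ((t^(2*ℓ))⁻¹ * f t
            - (4*(m:ℝ)) * ((t^(2*m-1)*(t^(2*ℓ))⁻¹) * Em t)) := by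
      apply intervalIntegral.integral_congr
      intro t _; ring
    rw [this, intervalIntegral.integral_sub h1 ((h2.const_mul _)),
      intervalIntegral.integral_const_mul, hAℓ]
  -- Step 2: Fubini + FTC
  have hD : (∫ t in x..1, (t^(2*m-1)*(t^(2*ℓ))⁻¹) * Em t)
      = (1/d) * Aℓ - (c/d) * Am := by
    rw [integral_of_le hx1.le]
    have e1 : ∫ t in Ioc x 1, (t^(2*m-1)*(t^(2*ℓ))⁻¹) * Em t
        = ∫ t in Ioc x 1, (t^(2*m-1)*(t^(2*ℓ))⁻¹) * ∫ s in Ioc t 1, (s ^ (2*m))⁻¹ * f s := by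
      refine setIntegral_congr_fun measurableSet_Ioc (fun t ht => ?_)
      rw [hEm]; simp only []
      rw [integral_of_le ht.2]
    rw [e1, fubini_triangle hwint (int_aux m hx0 hfx)]
    have e2 : ∫ s in Ioc x 1, (∫ t in Ioc x s, t^(2*m-1)*(t^(2*ℓ))⁻¹) * ((s ^ (2*m))⁻¹ * f s)
        = ∫ s in Ioc x 1, ((1/d) * ((s^(2*ℓ))⁻¹ * f s) - (c/d) * ((s^(2*m))⁻¹ * f s)) := by
      refine setIntegral_congr_fun measurableSet_Ioc (fun s hs => ?_)
      rw [inner_ftc ℓ m hm hne hx0 hs.1.le]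
      have hs0 : (0:ℝ) < s := hx0.trans hs.1
      have hsm : s^(2*m) ≠ 0 := pow_ne_zero _ hs0.ne'
      have hsl : s^(2*ℓ) ≠ 0 := pow_ne_zero _ hs0.ne'
      rw [hc, hd]
      field_simp
    rw [e2, integral_sub ((int_aux ℓ hx0 hfx).const_mul _) ((int_aux m hx0 hfx).const_mul _),
      MeasureTheory.integral_const_mul, MeasureTheory.integral_const_mul, hAℓ, hAm,
      integral_of_le hx1.le, integral_of_le hx1.le]
  rw [hsplit, hD]
  have hxc : x^(2*ℓ-1) * c = x^(2*m-1) := by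
    rw [hc]
    have hx2l : x^(2*ℓ) ≠ 0 := pow_ne_zero _ hx0.ne'
    field_simp
    rw [← pow_add, ← pow_add]
    congr 1
    omega
  clear_value c
  set P := x^(2*ℓ-1) with hP
  set Q := x^(2*m-1) with hQ
  clear_value P Q
  clear hP hQ hc
  rw [← hxc]
  field_simp
  ring


theorem stmt4 (ℓ m : ℕ) (hℓ : 1 ≤ ℓ) (hm : 1 ≤ m)
    (Tℓ Tm : (Lp ℝ 2 (volume.restrict (Ioo (0:ℝ) 1))) →L[ℝ]
             (Lp ℝ 2 (volume.restrict (Ioo (0:ℝ) 1))))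
    (hTℓ : ∀ f : Lp ℝ 2 (volume.restrict (Ioo (0:ℝ) 1)),
      ⇑(Tℓ f) =ᵐ[volume.restrict (Ioo (0:ℝ) 1)]
        fun x => f x - 4 * ℓ * x ^ (2 * ℓ - 1) * ∫ t in x..1, (t ^ (2 * ℓ))⁻¹ * f t)
    (hTm : ∀ f : Lp ℝ 2 (volume.restrict (Ioo (0:ℝ) 1)),
      ⇑(Tm f) =ᵐ[volume.restrict (Ioo (0:ℝ) 1)]
        fun x => f x - 4 * m * x ^ (2 * m - 1) * ∫ t in x..1, (t ^ (2 * m))⁻¹ * f t) :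
    Tℓ.comp Tm = Tm.comp Tℓ := by
  by_cases hem : ℓ = m
  · subst hem
    have : Tℓ = Tm := ContinuousLinearMap.ext fun f =>
      MeasureTheory.Lp.ext ((hTℓ f).trans (hTm f).symm)
    rw [this]
  · have h1ae : ∀ᵐ (t : ℝ) ∂(volume : Measure ℝ), t ≠ 1 := by
      rw [ae_iff]; simpa using measure_singleton (1:ℝ)
    have hfin : IsFiniteMeasure (volume.restrict (Ioo (0:ℝ) 1)) := by
      constructor
      rw [Measure.restrict_apply_univ, Real.volume_Ioo]
      exact ENNReal.ofReal_lt_top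
    refine ContinuousLinearMap.ext fun f => MeasureTheory.Lp.ext ?_
    have hfi : ∀ y : ℝ, 0 < y → IntegrableOn (⇑f) (Ioc y 1) := by
      intro y hy
      have hint : IntegrableOn (⇑f) (Ioo 0 1) volume :=
        (MeasureTheory.Lp.memLp f).integrable (by norm_num)
      exact ((hint.mono_set (Ioo_subset_Ioo hy.le le_rfl)).congr_set_ae
        Ioo_ae_eq_Ioc.symm)
    -- the two explicit single-application functions
    set gm : ℝ → ℝ := fun y => f y - 4*(m:ℝ)*y^(2*m-1) * ∫ t in y..1, (t ^ (2*m))⁻¹ * f t with hgm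
    set gl : ℝ → ℝ := fun y => f y - 4*(ℓ:ℝ)*y^(2*ℓ-1) * ∫ t in y..1, (t ^ (2*ℓ))⁻¹ * f t with hgl
    -- congruence for integrals
    have hcong : ∀ (k : ℕ) (u v : ℝ → ℝ), (u =ᵐ[volume.restrict (Ioo (0:ℝ) 1)] v) → ∀ x ∈ Ioo (0:ℝ) 1,
        (∫ t in x..1, (t ^ (2*k))⁻¹ * u t) = ∫ t in x..1, (t ^ (2*k))⁻¹ * v t := by
      intro k u v huv x hx
      apply intervalIntegral.integral_congr_ae
      filter_upwards [(ae_restrict_iff' measurableSet_Ioo).mp huv, h1ae] with t ht ht1 htI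
      rw [uIoc_of_le hx.2.le] at htI
      have : t ∈ Ioo (0:ℝ) 1 := ⟨hx.1.trans htI.1, lt_of_le_of_ne htI.2 ht1⟩
      rw [ht this]
    have stepL : ⇑((Tℓ.comp Tm) f) =ᵐ[volume.restrict (Ioo (0:ℝ) 1)]
        fun x => gm x - 4*(ℓ:ℝ)*x^(2*ℓ-1) * ∫ t in x..1, (t ^ (2*ℓ))⁻¹ * gm t := by
      filter_upwards [hTℓ (Tm f), hTm f,
        ae_restrict_mem measurableSet_Ioo] with x h1 h2 h3
      simp only [ContinuousLinearMap.comp_apply]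
      rw [h1, h2, hcong ℓ _ _ (hTm f) x h3]
    have stepR : ⇑((Tm.comp Tℓ) f) =ᵐ[volume.restrict (Ioo (0:ℝ) 1)]
        fun x => gl x - 4*(m:ℝ)*x^(2*m-1) * ∫ t in x..1, (t ^ (2*m))⁻¹ * gl t := by
      filter_upwards [hTm (Tℓ f), hTℓ f,
        ae_restrict_mem measurableSet_Ioo] with x h1 h2 h3
      simp only [ContinuousLinearMap.comp_apply]
      rw [h1, h2, hcong m _ _ (hTℓ f) x h3]
    refine stepL.trans (Filter.EventuallyEq.trans ?_ stepR.symm)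
    filter_upwards [ae_restrict_mem measurableSet_Ioo] with x hx
    have hK1 := key ℓ m hℓ hm hem (⇑f) hx.1 hx.2 (fun y hy => hfi y hy)
    have hK2 := key m ℓ hm hℓ (Ne.symm hem) (⇑f) hx.1 hx.2 (fun y hy => hfi y hy)
    simp only [hgm, hgl]
    rw [hK1, hK2]
    set Aℓ : ℝ := ∫ t in x..1, (t ^ (2*ℓ))⁻¹ * f t
    set Am : ℝ := ∫ t in x..1, (t ^ (2*m))⁻¹ * f t
    have hd0 : 2*(m:ℝ) - 2*ℓ ≠ 0 := by
      intro h
      apply hem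
      have : (ℓ:ℝ) = m := by linarith
      exact_mod_cast this
    have hd0' : 2*(ℓ:ℝ) - 2*m ≠ 0 := by
      intro h; apply hd0; linarith
    rw [show (2*(ℓ:ℝ) - 2*m) = -(2*m - 2*ℓ) by ring, div_neg]
    field_simp
    ring
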